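/- Let n ≥ 1 and x ∈ ℝⁿ. Let μ, γ, φ, δφ, Y, σ, w : ℝⁿ → ℝ and u : ℝⁿ → ℝⁿ, with μ and u differentiable at x, and let c ∈ ℝ be a constant. Assume that at the point x: (i) ∇·(μu)(x) − γ(x)φ(x)μ(x) + γ(x)δφ(x) + Y(x) = 0, and (ii) −∇·u(x) + c·σ(x)w(x) − γ(x)φ(x) = 0. Then ∇·(μ²u)(x) − μ(x)²·(3γ(x)φ(x) − c·σ(x)w(x)) + 2μ(x)·(γ(x)δφ(x) + Y(x)) = 0. -/

import Mathlib

open Metric Set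
open scoped RealInnerProductSpace

/-- Divergence of a vector field on ℝⁿ at a point: the trace of its Jacobian. -/
noncomputable def vdiv {n : ℕ} (V : EuclideanSpace ℝ (Fin n) → EuclideanSpace ℝ (Fin n))
    (x : EuclideanSpace ℝ (Fin n)) : ℝ :=
  LinearMap.trace ℝ (EuclideanSpace ℝ (Fin n)) (fderiv ℝ V x).toLinearMap

lemma trace_smulRight' {n : ℕ} (f : EuclideanSpace ℝ (Fin n) →ₗ[ℝ] ℝ)
    (v : EuclideanSpace ℝ (Fin n)) :
    LinearMap.trace ℝ _ (LinearMap.smulRight f v) = f v := by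
  have h : LinearMap.smulRight f v = (LinearMap.toSpanSingleton ℝ _ v).comp f := by
    ext x; simp [LinearMap.toSpanSingleton_apply]
  rw [h, LinearMap.trace_comp_comm']
  have h2 : f.comp (LinearMap.toSpanSingleton ℝ _ v) = (f v) • LinearMap.id := by
    ext r; simp [LinearMap.toSpanSingleton_apply, mul_comm]
  rw [h2, LinearMap.map_smul, LinearMap.trace_id]
  simp

lemma vdiv_smul {n : ℕ} (x : EuclideanSpace ℝ (Fin n))
    (f : EuclideanSpace ℝ (Fin n) → ℝ) (u : EuclideanSpace ℝ (Fin n) → EuclideanSpace ℝ (Fin n))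
    (hf : DifferentiableAt ℝ f x) (hu : DifferentiableAt ℝ u x) :
    vdiv (fun y => f y • u y) x = f x * vdiv u x + fderiv ℝ f x (u x) := by
  unfold vdiv
  rw [fderiv_fun_smul hf hu]
  have hc : ContinuousLinearMap.toLinearMap
      (f x • fderiv ℝ u x + (fderiv ℝ f x).smulRight (u x))
      = f x • (fderiv ℝ u x : EuclideanSpace ℝ (Fin n) →ₗ[ℝ] EuclideanSpace ℝ (Fin n))
        + LinearMap.smulRight ((fderiv ℝ f x) : EuclideanSpace ℝ (Fin n) →ₗ[ℝ] ℝ) (u x) := rfl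
  rw [hc, map_add, LinearMap.map_smul, trace_smulRight']
  simp [mul_comm]

/-- (Renorm-2): the renormalized identity obtained from (Renorm-1) using the pointwise
forms of the linearized and background first simplified P₂ equations. -/
theorem stmt_1 {n : ℕ} (hn : 1 ≤ n) (x : EuclideanSpace ℝ (Fin n))
    (μ γ φ δφ Y σ w : EuclideanSpace ℝ (Fin n) → ℝ)
    (u : EuclideanSpace ℝ (Fin n) → EuclideanSpace ℝ (Fin n)) (c : ℝ)
    (hμ : DifferentiableAt ℝ μ x) (hu : DifferentiableAt ℝ u x)
    (h1 : vdiv (fun y => μ y • u y) x - γ x * φ x * μ x + γ x * δφ x + Y x = 0)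
    (h2 : -vdiv u x + c * (σ x * w x) - γ x * φ x = 0) :
    vdiv (fun y => (μ y) ^ 2 • u y) x
      - (μ x) ^ 2 * (3 * (γ x * φ x) - c * (σ x * w x))
      + 2 * μ x * (γ x * δφ x + Y x) = 0 := by
  have key : vdiv (fun y => (μ y) ^ 2 • u y) x
      = 2 * μ x * vdiv (fun y => μ y • u y) x - (μ x) ^ 2 * vdiv u x := by
    have heq : (fun y => (μ y) ^ 2 • u y) = fun y => μ y • (μ y • u y) := by
      funext y; rw [smul_smul, sq]
    rw [heq, vdiv_smul x μ (fun y => μ y • u y) hμ (hμ.smul hu), vdiv_smul x μ u hμ hu, map_smul]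
    simp only [smul_eq_mul]
    ring
  rw [key]
  linear_combination 2 * μ x * h1 + (μ x)^2 * h2
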